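/- arXiv:1401.1266 — 6 statements merged into one kernel-verified Lean document; each statement's English description precedes it below -/
import Mathlib

section
/- Let A be a c.e. subset of ℕ. If some finite family of c.e. sets generates D(A), then either the empty family generates D(A), or {R} generates D(A) for some infinite computable set R, or {W} generates D(A) for some infinite noncomputable c.e. set W. Moreover, for any c.e. sets D and D', if the singleton family {D} and the singleton family {D'} both generate D(A), then D =* D'. -/
open Set Function

/-- A set of naturals is computably enumerable (c.e.) -/
def CESet (A : Set ℕ) : Prop := REPred (· ∈ A)

/-- A set of naturals is computable -/
def ComputableSet (A : Set ℕ) : Prop := ComputablePred (· ∈ A)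

/-- X ⊆* Y : X is almost contained in Y -/
def SubsetStar (X Y : Set ℕ) : Prop := (X \ Y).Finite

/-- X =* Y : X and Y differ by a finite set -/
def EqStar (X Y : Set ℕ) : Prop := (X \ Y).Finite ∧ (Y \ X).Finite

/-- G is a generating set for 𝒟(A): a countable family of c.e. sets, each disjoint
from A, such that every c.e. set disjoint from A is almost covered by finitely many
members of G. -/
def Generates (A : Set ℕ) (G : Set (Set ℕ)) : Prop :=
  G.Countable ∧ (∀ X ∈ G, CESet X) ∧ (∀ X ∈ G, Disjoint X A) ∧
  ∀ D : Set ℕ, CESet D → Disjoint D A →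
    ∃ F : Set (Set ℕ), F ⊆ G ∧ F.Finite ∧ SubsetStar D (⋃₀ F)

/-- S is simple -/
def SimpleSet (S : Set ℕ) : Prop :=
  CESet S ∧ Sᶜ.Infinite ∧ ∀ W : Set ℕ, CESet W → Disjoint W S → W.Finite

/-- A is 𝒟-maximal -/
def DMaximal (A : Set ℕ) : Prop :=
  CESet A ∧ ∀ W : Set ℕ, CESet W → ∃ D : Set ℕ, CESet D ∧ Disjoint D A ∧
    (SubsetStar W (A ∪ D) ∨ EqStar (W ∪ A ∪ D) Set.univ)

/-- M is r-maximal -/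
def RMaximal (M : Set ℕ) : Prop :=
  CESet M ∧ Mᶜ.Infinite ∧
    ∀ R : Set ℕ, ComputableSet R → (R ∩ Mᶜ).Finite ∨ (Rᶜ ∩ Mᶜ).Finite

/-- M is maximal -/
def MaximalSet (M : Set ℕ) : Prop :=
  CESet M ∧ Mᶜ.Infinite ∧
    ∀ W : Set ℕ, CESet W → M ⊆ W → (W \ M).Finite ∨ Wᶜ.Finite

/-- B is atomless -/
def AtomlessSet (B : Set ℕ) : Prop :=
  ∀ C : Set ℕ, CESet C → B ⊆ C → Cᶜ.Infinite →
    ∃ E : Set ℕ, CESet E ∧ SubsetStar C E ∧ (E \ C).Infinite ∧ Eᶜ.Infinite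

/-- A0, A1 form a Friedberg splitting of A -/
def FriedbergSplitting (A0 A1 A : Set ℕ) : Prop :=
  CESet A0 ∧ CESet A1 ∧ Disjoint A0 A1 ∧ A0 ∪ A1 = A ∧
    ∀ W : Set ℕ, CESet W → ¬ CESet (W \ A) → ¬ CESet (W \ A0) ∧ ¬ CESet (W \ A1)

/-- E is a major subset of D -/
def MajorIn (E D : Set ℕ) : Prop :=
  CESet E ∧ CESet D ∧ E ⊆ D ∧ (D \ E).Infinite ∧
    ∀ W : Set ℕ, CESet W → SubsetStar Dᶜ W → SubsetStar Eᶜ W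

/-- H is hh-simple: the lattice of c.e. supersets of H mod finite is a boolean algebra -/
def HHSimple (H : Set ℕ) : Prop :=
  CESet H ∧ Hᶜ.Infinite ∧
    ∀ W : Set ℕ, CESet W → ∃ V : Set ℕ, CESet V ∧
      EqStar ((W ∪ H) ∩ (V ∪ H)) H ∧ EqStar (W ∪ V ∪ H) Set.univ

/-- A is strongly r-separable -/
def StronglyRSeparable (A : Set ℕ) : Prop :=
  ∀ B : Set ℕ, CESet B → Disjoint B A →
    ∃ C : Set ℕ, ComputableSet C ∧ B ⊆ C ∧ Disjoint C A ∧ (C \ B).Infinite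

/-- Structure of a Type 5 generating family: D0 together with the R_i. -/
def Type5Family (D0 : Set ℕ) (R : ℕ → Set ℕ) : Prop :=
  CESet D0 ∧ ¬ ComputableSet D0 ∧ D0.Infinite ∧
  Function.Injective R ∧ (∀ i, D0 ≠ R i) ∧
  (∀ i, ComputableSet (R i) ∧ (R i).Infinite) ∧
  Pairwise (Function.onFun Disjoint R) ∧
  (∀ i, Disjoint D0 (R i))

/-- Structure of a Type 7 generating family: D0 together with the R_i. -/
def Type7Family (D0 : Set ℕ) (R : ℕ → Set ℕ) : Prop :=
  CESet D0 ∧ ¬ ComputableSet D0 ∧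
  Function.Injective R ∧ (∀ i, D0 ≠ R i) ∧
  (∀ i, ComputableSet (R i) ∧ (R i).Infinite) ∧
  Pairwise (Function.onFun Disjoint R) ∧
  {i : ℕ | (D0 ∩ R i).Nonempty}.Infinite

/-- Structure of a Type 8 generating family: the D_i together with the R_i. -/
def Type8Family (D R : ℕ → Set ℕ) : Prop :=
  Function.Injective D ∧ Function.Injective R ∧ (∀ i j, D i ≠ R j) ∧
  (∀ i, CESet (D i) ∧ ¬ ComputableSet (D i)) ∧
  Pairwise (Function.onFun Disjoint D) ∧
  (∀ i, ComputableSet (R i) ∧ (R i).Infinite) ∧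
  Pairwise (Function.onFun Disjoint R)

/-- Structure of a Type 9 generating family: the nested D_i together with the R_i. -/
def Type9Family (D R : ℕ → Set ℕ) : Prop :=
  Function.Injective R ∧ (∀ i j, D i ≠ R j) ∧
  (∀ i, ComputableSet (R i) ∧ (R i).Infinite) ∧
  Pairwise (Function.onFun Disjoint R) ∧
  (∀ i, CESet (D i) ∧ ¬ ComputableSet (D i) ∧ (D i).Infinite) ∧
  (∀ l, D l ⊆ D (l + 1)) ∧
  (∀ l, ¬ CESet (D (l + 1) \ D l)) ∧
  (∀ l, {j : ℕ | (R j \ D l).Infinite}.Infinite)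

def IsType1 (G : Set (Set ℕ)) : Prop := G = {∅}

def IsType2 (G : Set (Set ℕ)) : Prop :=
  ∃ R : Set ℕ, G = {R} ∧ ComputableSet R ∧ R.Infinite

def IsType3 (G : Set (Set ℕ)) : Prop :=
  ∃ W : Set ℕ, G = {W} ∧ CESet W ∧ ¬ ComputableSet W ∧ W.Infinite

def IsType4 (G : Set (Set ℕ)) : Prop :=
  ∃ R : ℕ → Set ℕ, G = Set.range R ∧ Function.Injective R ∧
    (∀ i, ComputableSet (R i) ∧ (R i).Infinite) ∧
    Pairwise (Function.onFun Disjoint R)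

def IsType5 (G : Set (Set ℕ)) : Prop :=
  ∃ (D0 : Set ℕ) (R : ℕ → Set ℕ), G = insert D0 (Set.range R) ∧ Type5Family D0 R

def IsType6 (G : Set (Set ℕ)) : Prop :=
  ∃ D : ℕ → Set ℕ, G = Set.range D ∧ Function.Injective D ∧
    (∀ i, CESet (D i) ∧ ¬ ComputableSet (D i) ∧ (D i).Infinite) ∧
    Pairwise (Function.onFun Disjoint D)

def IsType7 (G : Set (Set ℕ)) : Prop :=
  ∃ (D0 : Set ℕ) (R : ℕ → Set ℕ), G = insert D0 (Set.range R) ∧ Type7Family D0 R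

def IsType8 (G : Set (Set ℕ)) : Prop :=
  ∃ D R : ℕ → Set ℕ, G = Set.range D ∪ Set.range R ∧ Type8Family D R

def IsType9 (G : Set (Set ℕ)) : Prop :=
  ∃ D R : ℕ → Set ℕ, G = Set.range D ∪ Set.range R ∧ Type9Family D R

def IsType10 (G : Set (Set ℕ)) : Prop :=
  ∃ D : ℕ → Set ℕ, G = Set.range D ∧
    (∀ i, CESet (D i) ∧ ¬ ComputableSet (D i) ∧ (D i).Infinite) ∧
    (∀ l, D l ⊆ D (l + 1)) ∧
    (∀ l, ¬ CESet (D (l + 1) \ D l))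

/-- G is a generating set of Type n (n = 1, …, 10). -/
def GenTypeN (n : ℕ) (G : Set (Set ℕ)) : Prop :=
  match n with
  | 1 => IsType1 G
  | 2 => IsType2 G
  | 3 => IsType3 G
  | 4 => IsType4 G
  | 5 => IsType5 G
  | 6 => IsType6 G
  | 7 => IsType7 G
  | 8 => IsType8 G
  | 9 => IsType9 G
  | 10 => IsType10 G
  | _ => False

/-- The c.e. set A is of Type n: 𝒟(A) has a generating set of Type n
but no generating set of any Type m < n. -/
def SetOfType (A : Set ℕ) (n : ℕ) : Prop :=
  (∃ G : Set (Set ℕ), Generates A G ∧ GenTypeN n G) ∧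
  ∀ m : ℕ, m < n → ¬ ∃ G : Set (Set ℕ), Generates A G ∧ GenTypeN m G

/-- (F_i) is an A-special list. -/
def ASpecialList (A : Set ℕ) (F : ℕ → Set ℕ) : Prop :=
  F 0 = A ∧ (∀ i, CESet (F i) ∧ ¬ ComputableSet (F i)) ∧
  Pairwise (Function.onFun Disjoint F) ∧
  ∀ W : Set ℕ, CESet W → ∃ i : ℕ,
    SubsetStar W (⋃ l ≤ i, F l) ∨ EqStar (W ∪ ⋃ l ≤ i, F l) Set.univ


theorem re_or {p q : ℕ → Prop} (hp : REPred p) (hq : REPred q) :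
    REPred fun a => p a ∨ q a := by
  obtain ⟨k, hk, K⟩ := Partrec.merge' hp hq
  refine hk.dom_re.of_eq fun a => ?_
  rw [(K a).2]
  simp [Part.assert]

theorem ce_empty : CESet (∅ : Set ℕ) := by
  refine ComputablePred.to_re ⟨fun _ => instDecidableFalse, ?_⟩
  exact (Computable.const false).of_eq fun n => by simp

theorem ce_sUnion {G : Set (Set ℕ)} (hG : G.Finite) (h : ∀ X ∈ G, CESet X) :
    CESet (⋃₀ G) := by
  revert h
  refine Set.Finite.induction_on (motive := fun G _ => (∀ X ∈ G, CESet X) → CESet (⋃₀ G)) G hG (fun _ => by simpa using ce_empty) ?_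
  intro a s _ _ ih h
  rw [Set.sUnion_insert]
  have ha : CESet a := h a (Set.mem_insert _ _)
  have hs := ih fun X hX => h X (Set.mem_insert_of_mem _ hX)
  exact (re_or ha hs).of_eq fun n => by simp [Set.mem_union]

theorem gen_singleton {A U : Set ℕ} (hU : CESet U) (hdisj : Disjoint U A)
    (hcov : ∀ D : Set ℕ, CESet D → Disjoint D A → SubsetStar D U) :
    Generates A {U} := by
  refine ⟨Set.countable_singleton _, ?_, ?_, ?_⟩
  · rintro X rfl; exact hU
  · rintro X rfl; exact hdisj
  · intro D hD hDA
    exact ⟨{U}, Set.Subset.rfl, Set.finite_singleton _, by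
      simpa using hcov D hD hDA⟩

theorem gen_almost_subset {A D X : Set ℕ} (hG : Generates A {X})
    (hD : CESet D) (hDA : Disjoint D A) : SubsetStar D X := by
  obtain ⟨F, hFsub, hFfin, hstar⟩ := hG.2.2.2 D hD hDA
  have : ⋃₀ F ⊆ X := by
    intro x hx
    obtain ⟨Y, hY, hxY⟩ := hx
    rcases hFsub hY with rfl
    exact hxY
  exact hstar.subset (Set.diff_subset_diff_right this)

theorem stmt_0 (A : Set ℕ) (hA : CESet A) :
    ((∃ G : Set (Set ℕ), G.Finite ∧ Generates A G) →
      (Generates A ∅ ∨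
        (∃ R : Set ℕ, ComputableSet R ∧ R.Infinite ∧ Generates A {R}) ∨
        (∃ W : Set ℕ, CESet W ∧ ¬ ComputableSet W ∧ W.Infinite ∧ Generates A {W}))) ∧
    (∀ D D' : Set ℕ, CESet D → CESet D' → Generates A {D} → Generates A {D'} →
      EqStar D D') := by
  constructor
  · rintro ⟨G, hGfin, hGgen⟩
    obtain ⟨hGc, hGce, hGdisj, hGcov⟩ := hGgen
    set U := ⋃₀ G with hUdef
    have hUce : CESet U := ce_sUnion hGfin hGce
    have hUdisj : Disjoint U A := by
      rw [Set.disjoint_sUnion_left]; exact hGdisj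
    have hcov : ∀ D : Set ℕ, CESet D → Disjoint D A → SubsetStar D U := by
      intro D hD hDA
      obtain ⟨F, hFsub, hFfin, hstar⟩ := hGcov D hD hDA
      have hsub : ⋃₀ F ⊆ U := Set.sUnion_subset_sUnion hFsub
      exact hstar.subset (Set.diff_subset_diff_right hsub)
    by_cases hUinf : U.Infinite
    · by_cases hUcomp : ComputableSet U
      · exact Or.inr (Or.inl ⟨U, hUcomp, hUinf, gen_singleton hUce hUdisj hcov⟩)
      · exact Or.inr (Or.inr ⟨U, hUce, hUcomp, hUinf, gen_singleton hUce hUdisj hcov⟩)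
    · left
      rw [Set.not_infinite] at hUinf
      refine ⟨Set.countable_empty, by simp, by simp, ?_⟩
      intro D hD hDA
      refine ⟨∅, Set.Subset.rfl, Set.finite_empty, ?_⟩
      have hDfin : D.Finite := by
        have := hcov D hD hDA
        have : D ⊆ (D \ U) ∪ U := fun x hx => by
          by_cases hxU : x ∈ U
          · exact Or.inr hxU
          · exact Or.inl ⟨hx, hxU⟩
        exact Set.Finite.subset ((hcov D hD hDA).union hUinf) this
      simpa [SubsetStar] using hDfin
  · intro D D' hD hD' hGD hGD'
    have hDA : Disjoint D A := hGD.2.2.1 D rfl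
    have hD'A : Disjoint D' A := hGD'.2.2.1 D' rfl
    exact ⟨gen_almost_subset hGD' hD hDA, gen_almost_subset hGD hD' hD'A⟩
end

section
/- Let A be a c.e. subset of ℕ, let (R_i)_{i∈ℕ} be a family of computable sets, and let G be a countable family of c.e. sets such that {R_i : i ∈ ℕ} ∪ G generates D(A). Then there exists a family (R'_i)_{i∈ℕ} of pairwise disjoint computable sets (some possibly empty) such that {R'_i : i ∈ ℕ} ∪ G generates D(A). -/
open Set Function

private lemma cp_and {p q : ℕ → Prop} (hp : ComputablePred p) (hq : ComputablePred q) :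
    ComputablePred fun n => p n ∧ q n := by
  obtain ⟨f, hf, rfl⟩ := ComputablePred.computable_iff.1 hp
  obtain ⟨g, hg, rfl⟩ := ComputablePred.computable_iff.1 hq
  exact ComputablePred.computable_iff.2 ⟨fun n => f n && g n,
    (Primrec.and.comp .fst .snd).to_comp.comp (hf.pair hg) |>.of_eq (by intro n; simp),
    by funext n; simp [Bool.and_eq_true]⟩

theorem stmt_1 (A : Set ℕ) (hA : CESet A) (R : ℕ → Set ℕ)
    (hR : ∀ i, ComputableSet (R i)) (G : Set (Set ℕ))
    (hgen : Generates A (Set.range R ∪ G)) :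
    ∃ R' : ℕ → Set ℕ, (∀ i, ComputableSet (R' i)) ∧
      Pairwise (Function.onFun Disjoint R') ∧
      Generates A (Set.range R' ∪ G) := by
  classical
  obtain ⟨hcnt, hce, hdisj, hcover⟩ := hgen
  set R' : ℕ → Set ℕ := fun i => {n | n ∈ R i ∧ ∀ j < i, n ∉ R j} with hR'def
  have hR'sub : ∀ i, R' i ⊆ R i := fun i n hn => hn.1
  have hcomp' : ∀ i, ComputableSet (R' i) := by
    intro i
    have hall : ∀ k, ComputablePred fun n => ∀ j < k, n ∉ R j := by
      intro k
      induction k with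
      | zero => exact (ComputablePred.computable_iff.2
          ⟨fun _ => true, Computable.const true, by funext n; simp⟩)
      | succ k ih =>
          have := cp_and ih ((hR k).not)
          exact this.of_eq (by
            intro n
            constructor
            · rintro ⟨h1, h2⟩ j hj
              rcases Nat.lt_succ_iff_lt_or_eq.1 hj with h | rfl
              · exact h1 j h
              · exact h2
            · intro h
              exact ⟨fun j hj => h j (hj.trans (Nat.lt_succ_self k)), h k (Nat.lt_succ_self k)⟩)
    exact cp_and (hR i) (hall i)
  have hpw : Pairwise (Function.onFun Disjoint R') := by
    intro i j hij
    rcases hij.lt_or_gt with h | h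
    · exact Set.disjoint_left.2 fun n hni hnj => hnj.2 i h hni.1
    · exact Set.disjoint_left.2 fun n hni hnj => hni.2 j h hnj.1
  have hcovRi : ∀ i, R i ⊆ ⋃ j ∈ {j | j ≤ i}, R' j := by
    intro i n hn
    have hex : ∃ j, n ∈ R j := ⟨i, hn⟩
    refine Set.mem_biUnion (show Nat.find hex ≤ i from Nat.find_le hn) ?_
    exact ⟨Nat.find_spec hex, fun j hj => Nat.find_min hex hj⟩
  refine ⟨R', hcomp', hpw, ?_, ?_, ?_, ?_⟩
  · exact (Set.countable_range R').union (hcnt.mono Set.subset_union_right)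
  · rintro X (⟨i, rfl⟩ | hXG)
    · exact (hcomp' i).to_re
    · exact hce X (Or.inr hXG)
  · rintro X (⟨i, rfl⟩ | hXG)
    · exact (hdisj (R i) (Or.inl ⟨i, rfl⟩)).mono_left (hR'sub i)
    · exact hdisj X (Or.inr hXG)
  · intro D hD hDA
    obtain ⟨F, hFsub, hFfin, hFstar⟩ := hcover D hD hDA
    set f : Set ℕ → ℕ := fun X => if h : ∃ i, R i = X then Nat.find h else 0 with hfdef
    obtain ⟨N, hN⟩ := (hFfin.image f).bddAbove
    refine ⟨(F ∩ G) ∪ (R' '' {j | j ≤ N}), ?_, ?_, ?_⟩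
    · rintro X (⟨-, hXG⟩ | ⟨j, -, rfl⟩)
      · exact Or.inr hXG
      · exact Or.inl ⟨j, rfl⟩
    · exact ((hFfin.subset Set.inter_subset_left)).union
        ((Set.finite_Iic N).image R')
    · refine (hFstar.subset ?_)
      intro n hn
      refine ⟨hn.1, fun hcon => hn.2 ?_⟩
      obtain ⟨X, hXF, hnX⟩ := hcon
      rcases hFsub hXF with ⟨i, rfl⟩ | hXG
      · have hex : ∃ k, R k = R i := ⟨i, rfl⟩
        have hfX : f (R i) = Nat.find hex := by simp [hfdef, hex]
        have hle : Nat.find hex ≤ N := by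
          have := hN (Set.mem_image_of_mem f hXF)
          rwa [hfX] at this
        have : n ∈ R (Nat.find hex) := (Nat.find_spec hex).symm ▸ hnX
        obtain ⟨j, hj, hj2⟩ := Set.mem_iUnion₂.1 (hcovRi _ this)
        exact ⟨R' j, Or.inr ⟨j, hj.trans hle, rfl⟩, hj2⟩
      · exact ⟨X, Or.inl ⟨hXF, hXG⟩, hnX⟩
end

section
/- Let A0 be a c.e. subset of ℕ and R a computable set disjoint from A0, and set A = A0 ∪ R. Let G be a countable family of c.e. sets each disjoint from A. Then G generates D(A) if and only if G ∪ {R} generates D(A0). -/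
open Set Function

theorem rePred_and_aux {p q : ℕ → Prop} (hp : REPred p) (hq : REPred q) :
    REPred fun a => p a ∧ q a := by
  have h : Partrec fun a => (Part.assert (p a) fun _ => Part.some ()).bind
      fun _ => Part.assert (q a) fun _ => Part.some () :=
    hp.bind (hq.comp Computable.fst)
  exact h.dom_re.of_eq fun a => by simp [Part.assert]

theorem stmt_7 (A0 R : Set ℕ) (hA0 : CESet A0) (hR : ComputableSet R)
    (hdisj : Disjoint A0 R) (A : Set ℕ) (hA : A = A0 ∪ R)
    (G : Set (Set ℕ)) (hGc : G.Countable) (hce : ∀ X ∈ G, CESet X)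
    (hGdisj : ∀ X ∈ G, Disjoint X A) :
    Generates A G ↔ Generates A0 (G ∪ {R}) := by
  subst hA
  constructor
  · rintro ⟨-, -, -, hgen⟩
    refine ⟨hGc.union (Set.countable_singleton R), ?_, ?_, ?_⟩
    · rintro X (hX | hX)
      · exact hce X hX
      · simp only [Set.mem_singleton_iff] at hX
        subst hX
        exact hR.to_re
    · rintro X (hX | hX)
      · exact (hGdisj X hX).mono_right Set.subset_union_left
      · simp only [Set.mem_singleton_iff] at hX
        subst hX
        exact hdisj.symm
    · intro D hD hDdisj
      -- Consider D' = D ∩ Rᶜ, which is c.e. and disjoint from A0 ∪ R.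
      have hD' : CESet (D ∩ Rᶜ) := by
        have : REPred fun n => n ∈ D ∧ n ∉ R :=
          rePred_and_aux hD (ComputablePred.not hR).to_re
        exact this.of_eq fun n => by
          simp [Set.mem_inter_iff, Set.mem_compl_iff]
      have hdisj' : Disjoint (D ∩ Rᶜ) (A0 ∪ R) := by
        rw [Set.disjoint_union_right]
        constructor
        · exact (hDdisj.mono_left Set.inter_subset_left)
        · exact Set.disjoint_left.mpr fun x hx => hx.2
      obtain ⟨F, hFG, hFfin, hFsub⟩ := hgen (D ∩ Rᶜ) hD' hdisj'
      refine ⟨F ∪ {R}, Set.union_subset_union_left _ hFG,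
        hFfin.union (Set.finite_singleton R), ?_⟩
      have : D \ ⋃₀ (F ∪ {R}) ⊆ (D ∩ Rᶜ) \ ⋃₀ F := by
        intro x hx
        rw [Set.sUnion_union, Set.sUnion_singleton] at hx
        exact ⟨⟨hx.1, fun hxR => hx.2 (Set.mem_union_right _ hxR)⟩,
          fun hxF => hx.2 (Set.mem_union_left _ hxF)⟩
      exact hFsub.subset this
  · rintro ⟨-, -, -, hgen⟩
    refine ⟨hGc, hce, hGdisj, ?_⟩
    intro D hD hDdisj
    rw [Set.disjoint_union_right] at hDdisj
    obtain ⟨F, hFG, hFfin, hFsub⟩ := hgen D hD hDdisj.1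
    refine ⟨F \ {R}, ?_, hFfin.diff, ?_⟩
    · intro X hX
      rcases hFG hX.1 with hXG | hXR
      · exact hXG
      · exact absurd hXR hX.2
    · have : D \ ⋃₀ (F \ {R}) ⊆ D \ ⋃₀ F := by
        intro x hx
        refine ⟨hx.1, fun hxF => ?_⟩
        obtain ⟨Y, hYF, hxY⟩ := hxF
        by_cases hYR : Y = R
        · subst hYR
          exact hDdisj.2.le_bot ⟨hx.1, hxY⟩
        · exact hx.2 ⟨Y, ⟨hYF, hYR⟩, hxY⟩
      exact hFsub.subset this
end

section
/- Let A be a noncomputable c.e. subset of ℕ. Then there exists a computable set R disjoint from A such that A ∪ R is simple if and only if there exists a computable set R' such that the singleton family {R'} generates D(A). -/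
open Set Function

-- re ∧ computable is re
lemma REPred.and_comp {p q : ℕ → Prop} (hp : REPred p) (hq : ComputablePred q) :
    REPred fun a => p a ∧ q a := by
  obtain ⟨g, hg, rfl⟩ := ComputablePred.computable_iff.1 hq
  have : Partrec fun a => cond (g a) (Part.assert (p a) fun _ => Part.some ()) Part.none :=
    Partrec.cond hg hp Partrec.none
  refine this.of_eq fun a => Part.ext fun u => ?_
  cases u; cases h : g a <;> simp [Part.assert, h]

lemma REPred.or_comp {p q : ℕ → Prop} (hp : REPred p) (hq : ComputablePred q) :
    REPred fun a => p a ∨ q a := by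
  obtain ⟨g, hg, rfl⟩ := ComputablePred.computable_iff.1 hq
  have : Partrec fun a => cond (g a) (Part.some ()) (Part.assert (p a) fun _ => Part.some ()) :=
    Partrec.cond hg (Computable.const ()).partrec hp
  refine this.of_eq fun a => Part.ext fun u => ?_
  cases u; cases h : g a <;> simp [Part.assert, h]

lemma computablePred_or {p q : ℕ → Prop} (hp : ComputablePred p) (hq : ComputablePred q) :
    ComputablePred fun a => p a ∨ q a := by
  obtain ⟨f, hf, rfl⟩ := ComputablePred.computable_iff.1 hp
  obtain ⟨g, hg, rfl⟩ := ComputablePred.computable_iff.1 hq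
  refine ComputablePred.computable_iff.2 ⟨fun a => f a || g a, ?_, ?_⟩
  · exact (Computable.cond hf (Computable.const true) hg).of_eq fun a => by cases f a <;> simp
  · funext a; simp

lemma primrec_mem_list (l : List ℕ) : PrimrecPred (fun x => x ∈ l) := by
  induction l with
  | nil => exact (Primrec.primrecPred (p := fun _ : ℕ => False) (Primrec.const false)).of_eq fun x => by simp
  | cons a l ih =>
      have h1 : PrimrecPred fun x : ℕ => x = a := Primrec.eq.comp Primrec.id (Primrec.const a)
      exact (h1.or ih).of_eq fun x => by simp
  
lemma computableSet_of_finite {F : Set ℕ} (h : F.Finite) : ComputablePred (· ∈ F) := by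
  classical
  refine ComputablePred.computable_iff.2 ⟨fun x => decide (x ∈ h.toFinset.toList), ?_, ?_⟩
  · exact (primrec_mem_list _).computablePred.decide
  · funext x; simp


theorem stmt_8' (A : Set ℕ) (hA : REPred (· ∈ A)) (hnc : ¬ ComputablePred (· ∈ A)) :
    (∃ R : Set ℕ, ComputablePred (· ∈ R) ∧ Disjoint R A ∧
      (REPred (· ∈ A ∪ R) ∧ (A ∪ R)ᶜ.Infinite ∧
        ∀ W : Set ℕ, REPred (· ∈ W) → Disjoint W (A ∪ R) → W.Finite)) ↔
      (∃ R' : Set ℕ, ComputablePred (· ∈ R') ∧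
        ((({R'} : Set (Set ℕ)).Countable) ∧ (∀ X ∈ ({R'} : Set (Set ℕ)), REPred (· ∈ X)) ∧
          (∀ X ∈ ({R'} : Set (Set ℕ)), Disjoint X A) ∧
          ∀ D : Set ℕ, REPred (· ∈ D) → Disjoint D A →
            ∃ F : Set (Set ℕ), F ⊆ {R'} ∧ F.Finite ∧ (D \ ⋃₀ F).Finite)) := by
  constructor
  · rintro ⟨R, hRc, hRA, hSce, hScompl, hSsimp⟩
    refine ⟨R, hRc, Set.countable_singleton _, ?_, ?_, ?_⟩
    · rintro X rfl; exact hRc.to_re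
    · rintro X rfl; exact hRA
    · intro D hD hDA
      refine ⟨{R}, le_refl _, Set.finite_singleton _, ?_⟩
      rw [Set.sUnion_singleton]
      have hWce : REPred (· ∈ D \ R) := by
        have := hD.and_comp hRc.not
        exact this.of_eq fun a => by simp [Set.mem_diff]
      have hWdisj : Disjoint (D \ R) (A ∪ R) := by
        rw [Set.disjoint_union_right]
        exact ⟨hDA.mono_left Set.diff_subset, Set.disjoint_sdiff_left⟩
      exact hSsimp _ hWce hWdisj
  · rintro ⟨R', hR'c, _, _, hdisj, hcov⟩
    have hR'A : Disjoint R' A := hdisj R' rfl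
    refine ⟨R', hR'c, hR'A, ?_, ?_, ?_⟩
    · exact (hA.or_comp hR'c).of_eq fun a => by simp [Set.mem_union]
    · intro hfin
      apply hnc
      have : ComputablePred fun x => ¬ (x ∈ R' ∨ x ∈ (A ∪ R')ᶜ) :=
        (computablePred_or hR'c (computableSet_of_finite hfin)).not
      refine this.of_eq fun x => ?_
      constructor
      · rintro h
        rcases not_or.1 h with ⟨h1, h2⟩
        rcases not_not.1 h2 with h3 | h3
        · exact h3
        · exact absurd h3 h1
      · intro hx
        push_neg
        exact ⟨fun h => hR'A.le_bot ⟨h, hx⟩, fun h => h (Or.inl hx)⟩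
    · intro W hW hWd
      rw [Set.disjoint_union_right] at hWd
      obtain ⟨F, hFsub, _, hstar⟩ := hcov W hW hWd.1
      have hFR : ⋃₀ F ⊆ R' := Set.sUnion_subset fun X hX => by
        rw [hFsub hX]
      have heq : W \ ⋃₀ F = W := by
        ext x
        simp only [Set.mem_diff, and_iff_left_iff_imp]
        exact fun hx h => (Set.disjoint_left.1 hWd.2 hx) (hFR h)
      rwa [heq] at hstar

theorem stmt_8 (A : Set ℕ) (hA : CESet A) (hnc : ¬ ComputableSet A) :
    (∃ R : Set ℕ, ComputableSet R ∧ Disjoint R A ∧ SimpleSet (A ∪ R)) ↔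
      (∃ R' : Set ℕ, ComputableSet R' ∧ Generates A {R'}) := by
  exact stmt_8' A hA hnc
end

section
/- Let A0, A1 be disjoint c.e. subsets of ℕ with A0 ∪ A1 = A, and suppose A0, A1 form a Friedberg splitting of A. If a countable family G of c.e. sets generates D(A), then G ∪ {A1} generates D(A0). -/
open Set Function

theorem stmt_9 (A0 A1 A : Set ℕ) (hsplit : FriedbergSplitting A0 A1 A)
    (G : Set (Set ℕ)) (hgen : Generates A G) :
    Generates A0 (G ∪ {A1}) := by
  obtain ⟨hce0, hce1, hdisj, hunion, hfr⟩ := hsplit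
  obtain ⟨hcnt, hceG, hdisjG, hgenG⟩ := hgen
  have hA0A : A0 ⊆ A := hunion ▸ Set.subset_union_left
  refine ⟨hcnt.union (Set.countable_singleton _), ?_, ?_, ?_⟩
  · rintro X (hX | hX)
    · exact hceG X hX
    · rw [Set.mem_singleton_iff] at hX; exact hX ▸ hce1
  · rintro X (hX | hX)
    · exact Set.disjoint_of_subset_right hA0A (hdisjG X hX)
    · rw [Set.mem_singleton_iff] at hX; exact hX ▸ hdisj.symm
  · intro D hD hDA0
    have hDA0eq : D \ A0 = D := hDA0.sdiff_eq_left
    have hDA : CESet (D \ A) := by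
      by_contra h
      exact (hfr D hD h).1 (by rw [hDA0eq]; exact hD)
    have hdisjDA : Disjoint (D \ A) A := Set.disjoint_sdiff_left
    obtain ⟨F, hFG, hFfin, hFcov⟩ := hgenG (D \ A) hDA hdisjDA
    refine ⟨insert A1 F, ?_, hFfin.insert _, ?_⟩
    · exact Set.insert_subset (Or.inr rfl) (hFG.trans Set.subset_union_left)
    · apply Set.Finite.subset hFcov
      intro x hx
      rw [Set.sUnion_insert] at hx
      obtain ⟨hxD, hxU⟩ := hx
      have hx1 : x ∉ A1 := fun h => hxU (Or.inl h)
      have hxF : x ∉ ⋃₀ F := fun h => hxU (Or.inr h)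
      refine ⟨⟨hxD, fun hxA => ?_⟩, hxF⟩
      rw [← hunion] at hxA
      rcases hxA with h0 | h1
      · exact Set.disjoint_left.mp hDA0 hxD h0
      · exact hx1 h1
end

section
/- Let A be a c.e. subset of ℕ and suppose there is a c.e. set A1 and a simple set S such that A, A1 form a Friedberg splitting of S. Then there is a noncomputable c.e. set W such that the singleton family {W} generates D(A). -/
open Set Function

lemma ceUniv : CESet (Set.univ : Set ℕ) := by
  have : ComputablePred fun n : ℕ => n ∈ (Set.univ : Set ℕ) := by
    refine ⟨fun _ => inferInstanceAs (Decidable True), ?_⟩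
    simpa using (Computable.const true)
  exact this.to_re

theorem stmt_10 (A A1 S : Set ℕ) (hA : CESet A) (hA1 : CESet A1)
    (hS : SimpleSet S) (hsplit : FriedbergSplitting A A1 S) :
    ∃ W : Set ℕ, CESet W ∧ ¬ ComputableSet W ∧ Generates A {W} := by
  obtain ⟨hSce, hScoinf, hSsimple⟩ := hS
  obtain ⟨_, _, hdisj, hunion, hF⟩ := hsplit
  -- Sᶜ is not c.e.
  have hScompl : ¬ CESet Sᶜ := by
    intro h
    have hfin : Sᶜ.Finite := hSsimple Sᶜ h disjoint_compl_left
    exact hScoinf hfin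
  -- univ \ S = Sᶜ not c.e., so A1ᶜ not c.e.
  have huniv : ¬ CESet ((Set.univ : Set ℕ) \ S) := by
    simpa [Set.compl_eq_univ_diff] using hScompl
  have hkey := hF Set.univ ceUniv huniv
  have hA1compl : ¬ CESet ((Set.univ : Set ℕ) \ A1) := hkey.2
  have hA1nc : ¬ ComputableSet A1 := by
    intro hc
    apply hA1compl
    have : ComputablePred fun n => ¬ n ∈ A1 := ComputablePred.not hc
    have : CESet A1ᶜ := this.to_re
    simpa [Set.compl_eq_univ_diff] using this
  -- A1 disjoint from A
  have hdA1A : Disjoint A1 A := hdisj.symm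
  refine ⟨A1, hA1, hA1nc, ?_, ?_, ?_, ?_⟩
  · exact Set.countable_singleton _
  · rintro X rfl; exact hA1
  · rintro X rfl; exact hdA1A
  · intro D hD hDA
    refine ⟨{A1}, subset_rfl, Set.finite_singleton _, ?_⟩
    -- D \ A = D is c.e., so by Friedberg D \ S is c.e.
    have hDA' : D \ A = D := by
      ext x; simp only [Set.mem_diff, and_iff_left_iff_imp]
      intro hx hxA
      exact (Set.disjoint_left.mp hDA hx) hxA
    have hDS : CESet (D \ S) := by
      by_contra hnot
      have := (hF D hD hnot).1
      rw [hDA'] at this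
      exact this hD
    have hDSdisj : Disjoint (D \ S) S := Set.disjoint_sdiff_left
    have hfin : (D \ S).Finite := hSsimple _ hDS hDSdisj
    have : D \ ⋃₀ ({A1} : Set (Set ℕ)) ⊆ D \ S := by
      intro x hx
      rw [Set.sUnion_singleton] at hx
      refine ⟨hx.1, fun hxS => ?_⟩
      rw [← hunion] at hxS
      rcases hxS with hxA | hxA1
      · exact (Set.disjoint_left.mp hDA hx.1) hxA
      · exact hx.2 hxA1
    exact hfin.subset this
end
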